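/- arXiv:0907.4126 — 6 statements merged into one kernel-verified Lean document; each statement's English description precedes it below -/
import Mathlib

section
/- Every second countable T1 topological space has a countable open-finite basis, i.e., a countable basis B such that every element of B has only finitely many supersets in B. -/
open TopologicalSpace Set

universe u

variable {X : Type*}

/-- `U ≤ V` for sequences of open sets: every `V j` contains some `U i`. -/
def SeqLE (U V : ℕ → Set X) : Prop := ∀ j, ∃ i, U i ⊆ V j

/-- Mutual cofinal refinement of sequences of open sets. -/
def SeqEquiv (U V : ℕ → Set X) : Prop := SeqLE U V ∧ SeqLE V U

/-- A property of (descending) sequences of open sets is invariant if closed under `SeqEquiv`. -/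
def InvariantProp (P : Set (ℕ → Set X)) : Prop :=
  ∀ U V : ℕ → Set X, SeqEquiv U V → V ∈ P → U ∈ P

/-- A property is monotone if downward closed under `SeqLE`. -/
def MonotoneProp (P : Set (ℕ → Set X)) : Prop :=
  ∀ U V : ℕ → Set X, SeqLE U V → V ∈ P → U ∈ P

/-- A strategy for Nonempty in the (generalized) Choquet game: to a list of previous
moves of Empty and the latest move `(x, U)` of Empty it assigns an open set. -/
def NStrategy (X : Type*) : Type _ := List (X × Set X) → X × Set X → Set X

/-- The responses of Nonempty's strategy `S` during the play where Empty plays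
`(x n, U n)` at round `n`. -/
def playV (S : NStrategy X) (x : ℕ → X) (U : ℕ → Set X) (n : ℕ) : Set X :=
  S ((List.range n).map fun i => (x i, U i)) (x n, U n)

/-- The sequence of moves of Empty is legal against `S`: each `U n` is an open
neighborhood of `x n` and is contained in Nonempty's previous response. -/
def LegalPlay [TopologicalSpace X] (S : NStrategy X) (x : ℕ → X) (U : ℕ → Set X) : Prop :=
  ∀ n, IsOpen (U n) ∧ x n ∈ U n ∧ U (n + 1) ⊆ playV S x U n

/-- `S` always answers a legal move `(x, U)` with an open `V` with `x ∈ V ⊆ U`. -/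
def ValidStrategy [TopologicalSpace X] (S : NStrategy X) : Prop :=
  ∀ x U, LegalPlay S x U →
    ∀ n, IsOpen (playV S x U n) ∧ x n ∈ playV S x U n ∧ playV S x U n ⊆ U n

/-- `S` is a winning strategy for Nonempty in the game `Ch_P(X)`. -/
def WinningStrategy [TopologicalSpace X] (S : NStrategy X) (P : Set (ℕ → Set X)) : Prop :=
  ValidStrategy S ∧ ∀ x U, LegalPlay S x U → (fun n => playV S x U n) ∈ P

/-- A stationary strategy only depends on Empty's last move. -/
def IsStationaryStrategy (S : NStrategy X) : Prop := ∀ h m, S h m = S [] m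

/-- The payoff set of the original Choquet game: the intersection is nonempty. -/
def ChoquetWin (X : Type*) : Set (ℕ → Set X) := {V | (⋂ n, V n).Nonempty}

/-- `S` is convergent: in any play following `S`, Nonempty's open sets form a
neighborhood basis at every point of their intersection. -/
def ConvergentStrategy [TopologicalSpace X] (S : NStrategy X) : Prop :=
  ∀ x U, LegalPlay S x U → ∀ y ∈ ⋂ n, playV S x U n,
    ∀ W : Set X, IsOpen W → y ∈ W → ∃ n, playV S x U n ⊆ W

/-- Legal play in the basis-restricted game `Ch_P(X, B)`. -/
def LegalPlayIn [TopologicalSpace X] (B : Set (Set X)) (S : NStrategy X)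
    (x : ℕ → X) (U : ℕ → Set X) : Prop :=
  LegalPlay S x U ∧ ∀ n, U n ∈ B

/-- Winning strategy for Nonempty in the basis-restricted game `Ch_P(X, B)`. -/
def WinningStrategyIn [TopologicalSpace X] (B : Set (Set X)) (S : NStrategy X)
    (P : Set (ℕ → Set X)) : Prop :=
  (∀ x U, LegalPlayIn B S x U → ∀ n,
    IsOpen (playV S x U n) ∧ x n ∈ playV S x U n ∧ playV S x U n ⊆ U n ∧ playV S x U n ∈ B) ∧
  ∀ x U, LegalPlayIn B S x U → (fun n => playV S x U n) ∈ P

/-- A family of sets is open-finite if each member has only finitely many supersets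
in the family. -/
def IsOpenFinite (B : Set (Set X)) : Prop := ∀ U ∈ B, {V ∈ B | U ⊆ V}.Finite

/-- A family is uniform if for every `x ∈ U ∈ B` only finitely many members of `B`
containing `x` fail to be subsets of `U`. -/
def IsUniformFamily (B : Set (Set X)) : Prop :=
  ∀ (x : X), ∀ U ∈ B, x ∈ U → {V ∈ B | x ∈ V ∧ ¬ V ⊆ U}.Finite

/-- A family is Noetherian if it satisfies the ascending chain condition. -/
def IsNoetherianFamily (B : Set (Set X)) : Prop :=
  ∀ f : ℕ → Set X, (∀ n, f n ∈ B) → (∀ n, f n ⊆ f (n + 1)) → ∃ N, ∀ n, N ≤ n → f n = f N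

/-- A basis is of countable order: every infinite strictly descending chain of members
of `B` around a point `x` is a neighborhood basis at `x`. -/
def CountableOrderBasis [TopologicalSpace X] (B : Set (Set X)) : Prop :=
  ∀ (x : X) (V : ℕ → Set X), (∀ n, V n ∈ B ∧ x ∈ V n ∧ V (n + 1) ⊂ V n) →
    ∀ W : Set X, IsOpen W → x ∈ W → ∃ n, V n ⊆ W

/-- Metacompactness: every open cover has a point-finite open refinement. -/
def MetacompactSpace (Y : Type*) [TopologicalSpace Y] : Prop :=
  ∀ 𝒰 : Set (Set Y), (∀ U ∈ 𝒰, IsOpen U) → ⋃₀ 𝒰 = univ →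
    ∃ 𝒱 : Set (Set Y), (∀ V ∈ 𝒱, IsOpen V) ∧ ⋃₀ 𝒱 = univ ∧
      (∀ V ∈ 𝒱, ∃ U ∈ 𝒰, V ⊆ U) ∧ ∀ y : Y, {V ∈ 𝒱 | y ∈ V}.Finite

/-- Every second countable T1 space has a countable open-finite basis. -/
theorem stmt0 (X : Type*) [TopologicalSpace X] [SecondCountableTopology X] [T1Space X] :
    ∃ B : Set (Set X), B.Countable ∧ IsTopologicalBasis B ∧ IsOpenFinite B := by
  rcases isEmpty_or_nonempty X with hX | hX
  · refine ⟨∅, countable_empty, ?_, ?_⟩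
    · exact isTopologicalBasis_of_isOpen_of_nhds (by simp) (fun a => (IsEmpty.false a).elim)
    · intro U hU; simp at hU
  obtain ⟨b, hbc, -, hbb⟩ := exists_countable_basis X
  obtain ⟨D, hDc, hDd⟩ := exists_countable_dense X
  set I : Set X := {x | IsOpen ({x} : Set X)} with hIdef
  have hIc : I.Countable := by
    have hsub : I ⊆ (fun x : X => ({x} : Set X)) ⁻¹' b := by
      intro x hx
      obtain ⟨v, hvb, hxv, hvs⟩ := hbb.exists_subset_of_mem_open (mem_singleton x) hx
      have hveq : v = {x} := by
        rcases subset_singleton_iff_eq.mp hvs with h | h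
        · exact absurd (h ▸ hxv) (notMem_empty x)
        · exact h
      simpa [hveq] using hvb
    exact (hbc.preimage Set.singleton_injective).mono hsub
  -- enumerate D ∪ I
  have hDne : D.Nonempty := hDd.nonempty
  obtain ⟨c, hc⟩ := (hDc.union hIc).exists_eq_range (hDne.mono subset_union_left)
  have hIr : I ⊆ range c := hc ▸ subset_union_right
  have hDr : D ⊆ range c := hc ▸ subset_union_left
  -- enumerate the basis
  have hbne : b.Nonempty := by
    obtain ⟨v, hvb, -, -⟩ := hbb.exists_subset_of_mem_open (mem_univ hX.some) isOpen_univ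
    exact ⟨v, hvb⟩
  obtain ⟨u, hu⟩ := hbc.exists_eq_range hbne
  have hub : ∀ n, u n ∈ b := fun n => hu ▸ mem_range_self n
  -- the new basis
  set B : Set (Set X) := {V | V.Nonempty ∧ ((∃ x ∈ I, V = {x}) ∨
      ∃ n : ℕ, ∃ E : Set X, (E = ∅ ∨ ∃ k : ℕ, c k ∉ I ∧ E = {c k}) ∧
        V = u n \ (c '' Iio n \ E))} with hBdef
  have hBopen : ∀ V ∈ B, IsOpen V := by
    rintro V ⟨-, ⟨x, hx, rfl⟩ | ⟨n, E, -, rfl⟩⟩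
    · exact hx
    · exact (hbb.isOpen (hub n)).sdiff ((((finite_Iio n).image c).diff (t := E)).isClosed)
  refine ⟨B, ?_, ?_, ?_⟩
  · -- countable
    have : B ⊆ ((fun x : X => ({x} : Set X)) '' I) ∪
        (range fun n : ℕ => u n \ (c '' Iio n)) ∪
        (range fun p : ℕ × ℕ => u p.1 \ (c '' Iio p.1 \ {c p.2})) := by
      rintro V ⟨-, ⟨x, hx, rfl⟩ | ⟨n, E, hE, rfl⟩⟩
      · exact Or.inl (Or.inl ⟨x, hx, rfl⟩)
      · rcases hE with rfl | ⟨k, -, rfl⟩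
        · exact Or.inl (Or.inr ⟨n, by simp⟩)
        · exact Or.inr ⟨⟨n, k⟩, rfl⟩
    exact (((hIc.image _).union (countable_range _)).union (countable_range _)).mono this
  · -- basis
    refine isTopologicalBasis_of_isOpen_of_nhds hBopen ?_
    intro a O haO hO
    by_cases haI : a ∈ I
    · exact ⟨{a}, ⟨⟨a, rfl⟩, Or.inl ⟨a, haI, rfl⟩⟩, rfl, singleton_subset_iff.mpr haO⟩
    · obtain ⟨v, hvb, hav, hvO⟩ := hbb.exists_subset_of_mem_open haO hO
      obtain ⟨n, rfl⟩ : ∃ n, u n = v := by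
        have := hu ▸ hvb; exact this
      by_cases hac : a ∈ c '' Iio n
      · obtain ⟨k, -, hk⟩ := hac
        refine ⟨u n \ (c '' Iio n \ {a}), ⟨⟨a, ⟨hav, fun h => h.2 rfl⟩⟩,
          Or.inr ⟨n, {a}, Or.inr ⟨k, by rwa [hk], by rw [hk]⟩, rfl⟩⟩,
          ⟨hav, fun h => h.2 rfl⟩, (diff_subset).trans hvO⟩
      · refine ⟨u n \ (c '' Iio n \ (∅ : Set X)), ⟨⟨a, ⟨hav, by simpa using hac⟩⟩,
          Or.inr ⟨n, ∅, Or.inl rfl, rfl⟩⟩, ⟨hav, by simpa using hac⟩,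
          (diff_subset).trans hvO⟩
  · -- open-finite
    intro V₀ hV₀
    have hV₀ne : V₀.Nonempty := hV₀.1
    -- bound on indices of supersets of second kind
    have key : ∃ k0 : ℕ, ∀ (m : ℕ) (E : Set X),
        (E = ∅ ∨ ∃ k : ℕ, c k ∉ I ∧ E = {c k}) →
        V₀ ⊆ u m \ (c '' Iio m \ E) → m ≤ k0 := by
      by_cases hVI : (V₀ ∩ I).Nonempty
      · obtain ⟨e, heV, heI⟩ := hVI
        obtain ⟨k, hk⟩ := hIr heI
        refine ⟨k, fun m E hE hsub => ?_⟩
        have heV' := hsub heV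
        have heE : e ∉ E := by
          rcases hE with rfl | ⟨j, hjI, rfl⟩
          · exact notMem_empty e
          · simp only [mem_singleton_iff]
            rintro rfl; exact hjI heI
        have hem : e ∉ c '' Iio m := fun h => heV'.2 ⟨h, heE⟩
        by_contra hmk
        push_neg at hmk
        exact hem ⟨k, hmk, hk⟩
      · -- no isolated points in V₀: find two dense points
        have hV₀o : IsOpen V₀ := hBopen V₀ hV₀
        obtain ⟨d1, hd1D, hd1V⟩ := hDd.exists_mem_open hV₀o hV₀ne
        have hV₁o : IsOpen (V₀ \ {d1}) := hV₀o.sdiff isClosed_singleton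
        have hV₁ne : (V₀ \ {d1}).Nonempty := by
          by_contra h
          rw [not_nonempty_iff_eq_empty, diff_eq_empty] at h
          have : V₀ = {d1} := (subset_singleton_iff_eq.mp h).resolve_left
            (by rintro rfl; exact hV₀ne.ne_empty rfl)
          exact hVI ⟨d1, hd1V, by simp only [hIdef, mem_setOf_eq]; rw [← this]; exact hV₀o⟩
        obtain ⟨d2, hd2D, hd2V⟩ := hDd.exists_mem_open hV₁o hV₁ne
        obtain ⟨k1, hk1⟩ := hDr hd1D
        obtain ⟨k2, hk2⟩ := hDr hd2D
        refine ⟨max k1 k2, fun m E hE hsub => ?_⟩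
        have h1 := hsub hd1V
        have h2 := hsub hd2V.1
        have hne : d1 ≠ d2 := fun h => hd2V.2 h.symm
        have : d1 ∉ E ∨ d2 ∉ E := by
          rcases hE with rfl | ⟨j, -, rfl⟩
          · exact Or.inl (notMem_empty _)
          · by_contra h
            push_neg at h
            exact hne (h.1.trans h.2.symm)
        rcases this with hdE | hdE
        · have hm : d1 ∉ c '' Iio m := fun h => h1.2 ⟨h, hdE⟩
          by_contra hmk
          push_neg at hmk
          exact hm ⟨k1, lt_of_le_of_lt (le_max_left _ _) hmk, hk1⟩
        · have hm : d2 ∉ c '' Iio m := fun h => h2.2 ⟨h, hdE⟩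
          by_contra hmk
          push_neg at hmk
          exact hm ⟨k2, lt_of_le_of_lt (le_max_right _ _) hmk, hk2⟩
    obtain ⟨k0, hk0⟩ := key
    have hsub : {V ∈ B | V₀ ⊆ V} ⊆ {V₀} ∪
        ⋃ m ∈ Iic k0, (fun E => u m \ (c '' Iio m \ E)) ''
          (insert (∅ : Set X) ((fun p => ({p} : Set X)) '' (c '' Iio m))) := by
      rintro V ⟨⟨-, ⟨x, -, rfl⟩ | ⟨m, E, hE, rfl⟩⟩, hVs⟩
      · left
        have : V₀ = {x} := (subset_singleton_iff_eq.mp hVs).resolve_left hV₀ne.ne_empty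
        exact this.symm
      · right
        refine mem_biUnion (hk0 m E hE hVs) ?_
        rcases hE with rfl | ⟨k, -, rfl⟩
        · exact ⟨∅, mem_insert _ _, rfl⟩
        · by_cases hkm : c k ∈ c '' Iio m
          · exact ⟨{c k}, mem_insert_of_mem _ ⟨c k, hkm, rfl⟩, rfl⟩
          · exact ⟨∅, mem_insert _ _, by simp [diff_singleton_eq_self hkm]⟩
    refine (Set.Finite.union (finite_singleton _) ?_).subset hsub
    refine (finite_Iic k0).biUnion fun m _ => ?_
    exact ((((finite_Iio m).image c).image _).insert ∅).image _
end

section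
/- If a T1 space has a nondiscrete topology and a countable basis enumerated as ⟨U_i⟩ without repetitions such that each U_i is either a singleton or infinite, then one can choose points x_i and sets V_i with V_i = U_i when U_i is a singleton and V_i = U_i \ {x_j : j < i} otherwise, so that each V_i has at most i+1 supersets in {V_i : i < ω}. -/
open TopologicalSpace Set

universe u

variable {X : Type*}

/-- A stationary strategy only depends on Empty's last move. -/
def NIsStationary (S : NStrategy X) : Prop := ∀ h m, S h m = S [] m

open Classical in
noncomputable def chooseX {X : Type*} (U : ℕ → Set X)
    (h : ∀ i, (∃ a, U i = {a}) ∨ (U i).Infinite) : ℕ → X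
  | i =>
    if hs : ∃ a, U i = {a} then hs.choose
    else
      have hne : (U i \ Set.range (fun p : {j // j < i} => chooseX U h p.1)).Nonempty :=
        (((h i).resolve_left hs).diff (Set.finite_range _)).nonempty
      hne.choose
  termination_by i => i
  decreasing_by all_goals exact p.2

open Classical in
theorem chooseX_pos {X : Type*} (U : ℕ → Set X)
    (h : ∀ i, (∃ a, U i = {a}) ∨ (U i).Infinite) (i : ℕ) (hs : ∃ a, U i = {a}) :
    chooseX U h i = hs.choose := by
  rw [chooseX.eq_def]; exact dif_pos hs

open Classical in
theorem chooseX_neg {X : Type*} (U : ℕ → Set X)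
    (h : ∀ i, (∃ a, U i = {a}) ∨ (U i).Infinite) (i : ℕ) (hs : ¬ ∃ a, U i = {a}) :
    chooseX U h i ∈ U i \ Set.range (fun p : {j // j < i} => chooseX U h p.1) := by
  conv_rhs => rw [chooseX.eq_def]
  rw [dif_neg hs]
  exact Exists.choose_spec _

/-- The inductive construction in Proposition 1.7: from an injective enumeration of a
basis of a nondiscrete T1 space, each set a singleton or infinite, one can choose
points `x i` and sets `V i` (removing earlier chosen points) so that each `V i` has
at most `i + 1` supersets among the `V j`'s. -/
theorem stmt2 (X : Type*) [TopologicalSpace X] [T1Space X]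
    (hnd : ¬ DiscreteTopology X)
    (U : ℕ → Set X) (hinj : Function.Injective U)
    (hbasis : IsTopologicalBasis (Set.range U))
    (hsinginf : ∀ i, (∃ a, U i = {a}) ∨ (U i).Infinite) :
    ∃ (x : ℕ → X) (V : ℕ → Set X),
      (∀ i a, U i = {a} → x i = a ∧ V i = U i) ∧
      (∀ i, (U i).Infinite → x i ∈ V i ∧ V i = U i \ {y | ∃ j < i, y = x j}) ∧
      (∀ i, {W ∈ Set.range V | V i ⊆ W}.Finite ∧
        {W ∈ Set.range V | V i ⊆ W}.ncard ≤ i + 1) := by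
  classical
  set x : ℕ → X := chooseX U hsinginf with hxdef
  set V : ℕ → Set X := fun i =>
    if ∃ a, U i = {a} then U i else U i \ {y | ∃ j < i, y = x j} with hVdef
  -- basic facts
  have hxsing : ∀ i a, U i = {a} → x i = a := by
    intro i a ha
    have hs : ∃ a, U i = {a} := ⟨a, ha⟩
    have hx : x i = hs.choose := chooseX_pos U hsinginf i hs
    have := hs.choose_spec
    have h2 : ({hs.choose} : Set X) = {a} := this.symm.trans ha
    exact hx.trans (Set.singleton_eq_singleton_iff.mp h2)
  have hseteq : ∀ i, Set.range (fun p : {j // j < i} => chooseX U hsinginf p.1)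
      = {y | ∃ j < i, y = x j} := by
    intro i; ext y
    constructor
    · rintro ⟨⟨j, hj⟩, rfl⟩
      exact ⟨j, hj, rfl⟩
    · rintro ⟨j, hj, rfl⟩
      exact ⟨⟨j, hj⟩, rfl⟩
  have hxinf : ∀ i, (U i).Infinite → x i ∈ U i \ {y | ∃ j < i, y = x j} := by
    intro i hinf
    have hs : ¬ ∃ a, U i = {a} := by
      rintro ⟨a, ha⟩
      exact (ha ▸ hinf) (Set.finite_singleton a)
    have hx := chooseX_neg U hsinginf i hs
    rwa [hseteq] at hx
  have hVinf : ∀ i, (U i).Infinite → V i = U i \ {y | ∃ j < i, y = x j} := by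
    intro i hinf
    have hs : ¬ ∃ a, U i = {a} := by
      rintro ⟨a, ha⟩
      exact (ha ▸ hinf) (Set.finite_singleton a)
    rw [hVdef]; simp [hs]
  have hVsing : ∀ i, (∃ a, U i = {a}) → V i = U i := by
    intro i hs; rw [hVdef]; simp [hs]
  have hmem : ∀ i, x i ∈ V i := by
    intro i
    rcases hsinginf i with ⟨a, ha⟩ | hinf
    · rw [hVsing i ⟨a, ha⟩, ha, (hxsing i a ha)]; exact rfl
    · rw [hVinf i hinf]; exact hxinf i hinf
  refine ⟨x, V, ?_, ?_, ?_⟩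
  · intro i a ha
    exact ⟨hxsing i a ha, hVsing i ⟨a, ha⟩⟩
  · intro i hinf
    exact ⟨hmem i, hVinf i hinf⟩
  · intro i
    have hsub : {W ∈ Set.range V | V i ⊆ W} ⊆ V '' (Set.Iic i) := by
      rintro W ⟨⟨j, rfl⟩, hVij⟩
      by_cases hji : j ≤ i
      · exact ⟨j, hji, rfl⟩
      · -- i < j
        have hij : i < j := lt_of_not_ge hji
        have hxij : x i ∈ V j := hVij (hmem i)
        rcases hsinginf j with ⟨a, ha⟩ | hinf
        · -- V j = {a}, so V i ⊆ {a} and x i ∈ V i, hence V i = {a} = V j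
          have hVj : V j = {a} := by rw [hVsing j ⟨a, ha⟩, ha]
          have hVi : V i = {a} := by
            apply Set.eq_singleton_iff_nonempty_unique_mem.mpr
            refine ⟨⟨x i, hmem i⟩, fun y hy => ?_⟩
            have := hVij hy
            rwa [hVj] at this
          exact ⟨i, le_refl i, by rw [hVi, hVj]⟩
        · exfalso
          rw [hVinf j hinf] at hxij
          exact hxij.2 ⟨i, hij, rfl⟩
    have hfinIic : (V '' (Set.Iic i)).Finite := (Set.finite_Iic i).image V
    have hfin : {W ∈ Set.range V | V i ⊆ W}.Finite := hfinIic.subset hsub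
    refine ⟨hfin, ?_⟩
    calc {W ∈ Set.range V | V i ⊆ W}.ncard ≤ (V '' (Set.Iic i)).ncard :=
          Set.ncard_le_ncard hsub hfinIic
      _ ≤ (Set.Iic i).ncard := Set.ncard_image_le (Set.finite_Iic i)
      _ = i + 1 := by
          rw [← Finset.coe_Iic, Set.ncard_coe_finset, Nat.card_Iic]
end

section
/- Let ⟨P(k)⟩_{k<ω} be invariant properties of descending sequences of open subsets of a space X, and let P = ⋂_k P(k). If Nonempty has a winning strategy in the generalized Choquet game Ch_{P(k)}(X) for each k, then Nonempty has a winning strategy in Ch_P(X). -/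
open TopologicalSpace Set

universe u

variable {X : Type*}

section AuxInterleave

variable {X : Type*}

open Classical in
/-- Guarded strategy: if the raw response is invalid, answer `∅` (killing the play). -/
noncomputable def gguard [TopologicalSpace X] (T : NStrategy X) : NStrategy X := fun h m =>
  if IsOpen (T h m) ∧ m.1 ∈ T h m ∧ T h m ⊆ m.2 then T h m else (∅ : Set X)

lemma gguard_subset [TopologicalSpace X] (T : NStrategy X) (h : List (X × Set X))
    (m : X × Set X) : gguard T h m ⊆ m.2 := by
  unfold gguard
  split_ifs with hc
  · exact hc.2.2
  · exact Set.empty_subset _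

/-- The tower of composed responses: `Wlev T k m i` is the result of applying the
first `k` strategies (interleaved, strategy `r` starting at round `r`) to the moves `m`. -/
def Wlev (T : ℕ → NStrategy X) : ℕ → (ℕ → X × Set X) → ℕ → Set X
  | 0, m, i => (m i).2
  | (k+1), m, i =>
      T k ((List.range (i - k)).map fun j => ((m (k+j)).1, Wlev T k m (k+j)))
        ((m i).1, Wlev T k m i)

lemma Wlev_congr (T : ℕ → NStrategy X) :
    ∀ (k : ℕ) (m m' : ℕ → X × Set X) (i : ℕ),
      (∀ j ≤ i, m j = m' j) → Wlev T k m i = Wlev T k m' i := by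
  intro k
  induction k with
  | zero => intro m m' i h; simp only [Wlev]; rw [h i le_rfl]
  | succ k ih =>
      intro m m' i h
      simp only [Wlev]
      have h1 : ∀ j < i - k, m (k + j) = m' (k + j) := fun j hj => h _ (by omega)
      have h2 : ∀ j < i - k, Wlev T k m (k + j) = Wlev T k m' (k + j) := fun j hj =>
        ih m m' _ (fun j' hj' => h _ (by omega))
      have hl : ((List.range (i - k)).map fun j => ((m (k+j)).1, Wlev T k m (k+j)))
          = ((List.range (i - k)).map fun j => ((m' (k+j)).1, Wlev T k m' (k+j))) := by
        apply List.map_congr_left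
        intro j hj
        have hj' : j < i - k := List.mem_range.mp hj
        rw [h1 j hj', h2 j hj']
      rw [hl, h i le_rfl, ih m m' i (fun j' hj' => h _ hj')]

/-- The combined (interleaved) strategy. -/
noncomputable def comb (T : ℕ → NStrategy X) : NStrategy X := fun h m =>
  Wlev T (h.length + 1) (fun i => (h ++ [m]).getD i m) h.length

section Guarded

variable [TopologicalSpace X] (S : ℕ → NStrategy X)

/-- The family of guarded strategies. -/
noncomputable def Gfam (S : ℕ → NStrategy X) : ℕ → NStrategy X := fun k => gguard (S k)

lemma Wlev_succ_subset (k : ℕ) (m : ℕ → X × Set X) (i : ℕ) :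
    Wlev (Gfam S) (k+1) m i ⊆ Wlev (Gfam S) k m i := by
  simp only [Wlev]
  exact gguard_subset _ _ _

lemma Wlev_le {k l : ℕ} (h : k ≤ l) (m : ℕ → X × Set X) (i : ℕ) :
    Wlev (Gfam S) l m i ⊆ Wlev (Gfam S) k m i := by
  induction l with
  | zero => have : k = 0 := Nat.le_zero.mp h; subst this; exact fun _ h => h
  | succ l ih =>
      rcases Nat.lt_or_ge k (l+1) with hk | hk
      · exact (Wlev_succ_subset S l m i).trans (ih (by omega))
      · have : k = l + 1 := by omega
        subst this; exact fun _ h => h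

lemma playV_comb (x : ℕ → X) (U : ℕ → Set X) (n : ℕ) (T : ℕ → NStrategy X) :
    playV (comb T) x U n = Wlev T (n+1) (fun i => (x i, U i)) n := by
  unfold playV comb
  simp only [List.length_map, List.length_range]
  apply Wlev_congr
  intro j hj
  have hlist : ((List.range n).map (fun i => (x i, U i))) ++ [(x n, U n)]
      = (List.range (n+1)).map (fun i => (x i, U i)) := by
    rw [List.range_succ, List.map_append]; rfl
  rw [hlist]
  have hlen : j < ((List.range (n+1)).map (fun i => (x i, U i))).length := by
    simp; omega
  rw [List.getD_eq_getElem _ _ hlen]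
  simp

lemma playV_game (x : ℕ → X) (U : ℕ → Set X) (T : ℕ → NStrategy X) (k j : ℕ) :
    playV (T k) (fun j' => x (k + j')) (fun j' => Wlev T k (fun i => (x i, U i)) (k + j')) j
      = Wlev T (k+1) (fun i => (x i, U i)) (k + j) := by
  unfold playV
  simp only [Wlev, Nat.add_sub_cancel_left]

end Guarded

end AuxInterleave

/-- If Nonempty has a winning strategy in `Ch_{P k}(X)` for each of countably many
invariant properties `P k`, then Nonempty has a winning strategy in the game for
their intersection. -/
theorem stmt7 (X : Type*) [TopologicalSpace X] (P : ℕ → Set (ℕ → Set X))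
    (hinv : ∀ k, InvariantProp (P k))
    (hwin : ∀ k, ∃ S : NStrategy X, WinningStrategy S (P k)) :
    ∃ S : NStrategy X, WinningStrategy S (⋂ k, P k) := by
  classical
  choose S0 hS0 using hwin
  have key : ∀ x U, LegalPlay (comb (Gfam S0)) x U →
      (∀ n, IsOpen (playV (comb (Gfam S0)) x U n) ∧ x n ∈ playV (comb (Gfam S0)) x U n ∧
        playV (comb (Gfam S0)) x U n ⊆ U n) ∧
      ∀ k, (fun n => playV (comb (Gfam S0)) x U n) ∈ P k := by
    intro x U hleg
    set m : ℕ → X × Set X := fun i => (x i, U i) with hm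
    have hV : ∀ n, playV (comb (Gfam S0)) x U n = Wlev (Gfam S0) (n+1) m n := by
      intro n; rw [hm]; exact playV_comb x U n (Gfam S0)
    have hUsub : ∀ n, U (n+1) ⊆ Wlev (Gfam S0) (n+1) m n := by
      intro n; rw [← hV n]; exact (hleg n).2.2
    have hU0 : ∀ k i, Wlev (Gfam S0) k m i ⊆ U i := by
      intro k i
      have h := Wlev_le S0 (Nat.zero_le k) m i
      simpa [Wlev, hm] using h
    have hpg : ∀ k j, playV (Gfam S0 k) (fun j' => x (k+j'))
        (fun j' => Wlev (Gfam S0) k m (k+j')) j = Wlev (Gfam S0) (k+1) m (k+j) := by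
      intro k j; rw [hm]; exact playV_game x U (Gfam S0) k j
    have pass : ∀ k j,
        playV (Gfam S0 k) (fun j' => x (k+j')) (fun j' => Wlev (Gfam S0) k m (k+j')) j
          = playV (S0 k) (fun j' => x (k+j')) (fun j' => Wlev (Gfam S0) k m (k+j')) j
        ∧ IsOpen (Wlev (Gfam S0) (k+1) m (k+j))
        ∧ x (k+j) ∈ Wlev (Gfam S0) (k+1) m (k+j) := by
      intro k j
      have hne : x (k+j+1) ∈ Wlev (Gfam S0) (k+1) m (k+j) :=
        Wlev_le S0 (by omega) m (k+j) (hUsub (k+j) ((hleg (k+j+1)).2.1))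
      set L := (List.range j).map (fun i => (x (k+i), Wlev (Gfam S0) k m (k+i))) with hLdef
      set p : X × Set X := (x (k+j), Wlev (Gfam S0) k m (k+j)) with hpdef
      have hGg : playV (Gfam S0 k) (fun j' => x (k+j'))
          (fun j' => Wlev (Gfam S0) k m (k+j')) j = gguard (S0 k) L p := by
        rw [hLdef, hpdef]; rfl
      have hSg : playV (S0 k) (fun j' => x (k+j'))
          (fun j' => Wlev (Gfam S0) k m (k+j')) j = S0 k L p := by
        rw [hLdef, hpdef]; rfl
      have hgcond : gguard (S0 k) L p =
          if IsOpen (S0 k L p) ∧ p.1 ∈ S0 k L p ∧ S0 k L p ⊆ p.2 then S0 k L p else ∅ := rfl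
      by_cases hc : IsOpen (S0 k L p) ∧ p.1 ∈ S0 k L p ∧ S0 k L p ⊆ p.2
      · have he : gguard (S0 k) L p = S0 k L p := by rw [hgcond, if_pos hc]
        have hW : Wlev (Gfam S0) (k+1) m (k+j) = S0 k L p :=
          (hpg k j).symm.trans (hGg.trans he)
        refine ⟨hGg.trans (he.trans hSg.symm), ?_, ?_⟩
        · rw [hW]; exact hc.1
        · rw [hW]; exact hc.2.1
      · have he : gguard (S0 k) L p = ∅ := by rw [hgcond, if_neg hc]
        have hW : Wlev (Gfam S0) (k+1) m (k+j) = ∅ := (hpg k j).symm.trans (hGg.trans he)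
        rw [hW] at hne
        exact absurd hne (Set.notMem_empty _)
    have hlegG : ∀ k, LegalPlay (Gfam S0 k) (fun j' => x (k+j'))
        (fun j' => Wlev (Gfam S0) k m (k+j')) := by
      intro k n
      refine ⟨?_, ?_, ?_⟩
      · cases k with
        | zero => simpa [Wlev, hm] using (hleg n).1
        | succ k =>
            have h := (pass k (n+1)).2.1
            have e : k + (n+1) = (k+1) + n := by omega
            rw [e] at h
            exact h
      · cases k with
        | zero => simpa [Wlev, hm] using (hleg n).2.1
        | succ k =>
            have h := (pass k (n+1)).2.2
            have e : k + (n+1) = (k+1) + n := by omega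
            rw [e] at h
            exact h
      · rw [hpg k n]
        intro y hy
        have h1 : y ∈ U (k+n+1) := hU0 k (k+n+1) hy
        have h2 : y ∈ Wlev (Gfam S0) (k+n+1) m (k+n) := hUsub (k+n) h1
        exact Wlev_le S0 (by omega) m (k+n) h2
    have hlegS : ∀ k, LegalPlay (S0 k) (fun j' => x (k+j'))
        (fun j' => Wlev (Gfam S0) k m (k+j')) := by
      intro k n
      obtain ⟨h1, h2, h3⟩ := hlegG k n
      exact ⟨h1, h2, by rw [← (pass k n).1]; exact h3⟩
    have hwinK : ∀ k, (fun j => Wlev (Gfam S0) (k+1) m (k+j)) ∈ P k := by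
      intro k
      have h := (hS0 k).2 _ _ (hlegS k)
      have he : (fun j => playV (S0 k) (fun j' => x (k+j'))
          (fun j' => Wlev (Gfam S0) k m (k+j')) j)
          = (fun j => Wlev (Gfam S0) (k+1) m (k+j)) :=
        funext fun j => ((pass k j).1.symm).trans (hpg k j)
      exact he ▸ h
    have hdesc : ∀ a b, a ≤ b → Wlev (Gfam S0) (b+1) m b ⊆ Wlev (Gfam S0) (a+1) m a := by
      intro a b
      induction b with
      | zero =>
          intro hab
          have ha0 : a = 0 := Nat.le_zero.mp hab
          subst ha0
          exact fun _ h => h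
      | succ b ih =>
          intro hab
          rcases Nat.lt_or_ge a (b+1) with h | h
          · intro y hy
            have h1 : y ∈ U (b+1) := hU0 (b+2) (b+1) hy
            have h2 : y ∈ Wlev (Gfam S0) (b+1) m b := hUsub b h1
            exact ih (by omega) h2
          · have : a = b+1 := by omega
            subst this; exact fun _ h => h
    refine ⟨fun n => ?_, fun k => ?_⟩
    · rw [hV n]
      refine ⟨?_, ?_, ?_⟩
      · simpa using (pass n 0).2.1
      · simpa using (pass n 0).2.2
      · exact hU0 (n+1) n
    · have heqV : (fun n => playV (comb (Gfam S0)) x U n)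
          = (fun n => Wlev (Gfam S0) (n+1) m n) := funext hV
      rw [heqV]
      refine hinv k _ _ ⟨?_, ?_⟩ (hwinK k)
      · intro j
        exact ⟨k+j, Wlev_le S0 (by omega) m (k+j)⟩
      · intro n
        refine ⟨n+1, ?_⟩
        intro y hy
        have h1 : y ∈ U (k+(n+1)) := hU0 (k+1) (k+(n+1)) hy
        have h2 : y ∈ Wlev (Gfam S0) (k+n+1) m (k+n) := hUsub (k+n) h1
        exact hdesc n (k+n) (by omega) h2
  exact ⟨comb (Gfam S0), fun x U h => (key x U h).1,
    fun x U h => Set.mem_iInter.mpr fun k => (key x U h).2 k⟩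
end

section
/- If Nonempty has a winning strategy in the Choquet game Ch(Z) and there is an open continuous surjection f : Z → X, then Nonempty has a winning strategy in Ch(X). In particular, any open continuous image of a Choquet space is a Choquet space. -/
open TopologicalSpace Set

universe u

variable {X : Type*}

section ChoquetImage

variable {Z Y : Type*} [TopologicalSpace Z] [TopologicalSpace Y]

/-- Nonempty's last (interiorized) response recorded in a history of the lifted game. -/
def prevV (S : NStrategy Z) (l : List (Z × Set Z)) : Set Z :=
  match l.getLast? with
  | none => univ
  | some m => interior (S l.dropLast m)

open Classical in
/-- The lifted move in `Z` corresponding to Empty's move `m` in `Y`. -/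
noncomputable def zmove [Nonempty Z] (f : Z → Y) (S : NStrategy Z)
    (l : List (Z × Set Z)) (m : Y × Set Y) : Z × Set Z :=
  (if h : ∃ z, f z = m.1 ∧ z ∈ f ⁻¹' m.2 ∩ prevV S l then h.choose else Classical.arbitrary Z,
   f ⁻¹' m.2 ∩ prevV S l)

/-- Translate a history of moves in `Y` into a history of moves in `Z`. -/
noncomputable def zaux [Nonempty Z] (f : Z → Y) (S : NStrategy Z) :
    List (Z × Set Z) → List (Y × Set Y) → List (Z × Set Z)
  | acc, [] => acc
  | acc, m :: t => zaux f S (acc ++ [zmove f S acc m]) t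

/-- The strategy in `Y` induced by a strategy in `Z` via the open map `f`. -/
noncomputable def SX [Nonempty Z] (f : Z → Y) (S : NStrategy Z) : NStrategy Y :=
  fun h m =>
    f '' interior (S (zaux f S [] h) (zmove f S (zaux f S [] h) m))

theorem zaux_append [Nonempty Z] (f : Z → Y) (S : NStrategy Z)
    (h : List (Y × Set Y)) (acc : List (Z × Set Z)) (m : Y × Set Y) :
    zaux f S acc (h ++ [m]) = zaux f S acc h ++ [zmove f S (zaux f S acc h) m] := by
  induction h generalizing acc with
  | nil => simp [zaux]
  | cons a t ih => simp only [List.cons_append, zaux]; exact ih _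


theorem SX_spec [Nonempty Z] (f : Z → Y) (hcont : Continuous f)
    (hsurj : Function.Surjective f) (S : NStrategy Z) (hS : WinningStrategy S (ChoquetWin Z))
    (x : ℕ → Y) (U : ℕ → Set Y) (hL : LegalPlay (SX f S) x U) :
    ∃ z : ℕ → Z, ∃ W : ℕ → Set Z, LegalPlay S z W ∧
      ∀ n, playV (SX f S) x U n = f '' playV S z W n ∧ f (z n) = x n ∧
        z n ∈ playV S z W n ∧ playV S z W n ⊆ f ⁻¹' (U n) := by
  classical
  let Zl : ℕ → List (Z × Set Z) :=
    fun n => zaux f S [] ((List.range n).map fun i => (x i, U i))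
  let z : ℕ → Z := fun n => (zmove f S (Zl n) (x n, U n)).1
  let W : ℕ → Set Z := fun n => (zmove f S (Zl n) (x n, U n)).2
  have hZl : ∀ n, Zl n = zaux f S [] ((List.range n).map fun i => (x i, U i)) := fun _ => rfl
  have hzW : ∀ n, (z n, W n) = zmove f S (Zl n) (x n, U n) := fun _ => rfl
  have hA : ∀ n, Zl n = (List.range n).map fun i => (z i, W i) := by
    intro n
    induction n with
    | zero => simp [hZl, zaux]
    | succ k ih =>
      rw [hZl (k + 1)]
      simp only [List.range_succ, List.map_append, List.map_cons, List.map_nil]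
      rw [zaux_append, ← hZl k, ← hzW k, ih]
  have hB : ∀ n, playV S z W n = S (Zl n) (z n, W n) := by
    intro n; rw [playV, hA n]
  have hC : ∀ n, W n = f ⁻¹' (U n) ∩ prevV S (Zl n) := by
    intro n; rfl
  have hD : prevV S (Zl 0) = univ := by
    simp [hZl, zaux, prevV]
  have hE : ∀ n, prevV S (Zl (n + 1)) = interior (playV S z W n) := by
    intro n
    have hcons : Zl (n + 1) = Zl n ++ [(z n, W n)] := by
      rw [hZl (n + 1)]
      simp only [List.range_succ, List.map_append, List.map_cons, List.map_nil]
      rw [zaux_append, ← hZl n, ← hzW n]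
    rw [hcons, prevV]
    simp only [List.getLast?_concat, List.dropLast_concat]
    rw [hB n]
  have hF : ∀ n, playV (SX f S) x U n = f '' interior (playV S z W n) := by
    intro n
    rw [playV, SX]
    rw [← hZl n, ← hzW n, ← hB n]
  have hG : ∀ n, f (z n) = x n ∧ z n ∈ W n := by
    intro n
    have hex : ∃ w, f w = x n ∧ w ∈ f ⁻¹' (U n) ∩ prevV S (Zl n) := by
      cases n with
      | zero =>
        obtain ⟨w, hw⟩ := hsurj (x 0)
        exact ⟨w, hw, by simp [hw, hD, (hL 0).2.1]⟩
      | succ k =>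
        have hx : x (k + 1) ∈ playV (SX f S) x U k :=
          (hL k).2.2 (hL (k + 1)).2.1
        rw [hF k] at hx
        obtain ⟨w, hw, hfw⟩ := hx
        refine ⟨w, hfw, ?_, ?_⟩
        · simp only [mem_preimage, hfw]; exact (hL (k + 1)).2.1
        · rw [hE k]; exact hw
    have h1 : z n = hex.choose := by
      show (zmove f S (Zl n) (x n, U n)).1 = hex.choose
      simp only [zmove]
      exact dif_pos hex
    constructor
    · rw [h1]; exact hex.choose_spec.1
    · rw [hC n, h1]; exact hex.choose_spec.2
  have hLegalZ : LegalPlay S z W := by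
    intro n
    refine ⟨?_, (hG n).2, ?_⟩
    · rw [hC n]
      refine IsOpen.inter ((hL n).1.preimage hcont) ?_
      cases n with
      | zero => rw [hD]; exact isOpen_univ
      | succ k => rw [hE k]; exact isOpen_interior
    · rw [hC (n + 1), hE n]
      exact (inter_subset_right).trans interior_subset
  have hval := hS.1 z W hLegalZ
  refine ⟨z, W, hLegalZ, fun n => ?_⟩
  have hVopen : IsOpen (playV S z W n) := (hval n).1
  have hint : interior (playV S z W n) = playV S z W n := hVopen.interior_eq
  refine ⟨by rw [hF n, hint], (hG n).1, (hval n).2.1, ?_⟩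
  exact (hval n).2.2.trans (by rw [hC n]; exact inter_subset_left)

end ChoquetImage

/-- Any open continuous image of a Choquet space is a Choquet space. -/
theorem stmt13 (Z X : Type*) [TopologicalSpace Z] [TopologicalSpace X]
    (f : Z → X) (hcont : Continuous f) (hopen : IsOpenMap f)
    (hsurj : Function.Surjective f)
    (hZ : ∃ S : NStrategy Z, WinningStrategy S (ChoquetWin Z)) :
    ∃ S : NStrategy X, WinningStrategy S (ChoquetWin X) := by
  classical
  by_cases hX : Nonempty X
  · have hZne : Nonempty Z := by
      obtain ⟨x⟩ := hX
      obtain ⟨w, -⟩ := hsurj x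
      exact ⟨w⟩
    obtain ⟨S, hS⟩ := hZ
    refine ⟨SX f S, ?_, ?_⟩
    · intro x U hL n
      obtain ⟨z, W, hLZ, hspec⟩ := SX_spec f hcont hsurj S hS x U hL
      obtain ⟨heq, hfz, hmem, hsub⟩ := hspec n
      refine ⟨?_, ?_, ?_⟩
      · rw [heq]; exact hopen _ (hS.1 z W hLZ n).1
      · rw [heq]; exact ⟨z n, hmem, hfz⟩
      · rw [heq]
        intro y hy
        obtain ⟨w, hw, rfl⟩ := hy
        exact hsub hw
    · intro x U hL
      obtain ⟨z, W, hLZ, hspec⟩ := SX_spec f hcont hsurj S hS x U hL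
      obtain ⟨w, hw⟩ := hS.2 z W hLZ
      refine ⟨f w, ?_⟩
      simp only [mem_iInter] at hw ⊢
      intro n
      rw [(hspec n).1]
      exact ⟨w, hw n, rfl⟩
  · refine ⟨fun _ _ => ∅, ?_, ?_⟩ <;> intro x U hL
    · exact absurd ⟨x 0⟩ hX
    · exact absurd ⟨x 0⟩ hX
end

section
/- If a T1 space X has a basis of countable order, then Nonempty has a stationary convergent strategy in the Choquet game Ch(X) (not necessarily winning). -/
open TopologicalSpace Set

universe u

variable {X : Type*}

/-- If a T1 space has a basis of countable order, then Nonempty has a stationary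
convergent strategy in the Choquet game (not necessarily winning). -/
theorem stmt15 (X : Type*) [TopologicalSpace X] [T1Space X] (B : Set (Set X))
    (hB : IsTopologicalBasis B) (hco : CountableOrderBasis B) :
    ∃ S : NStrategy X, ValidStrategy S ∧ IsStationaryStrategy S ∧ ConvergentStrategy S := by
  classical
  set S : NStrategy X := fun _ m =>
    if h : ∃ V, V ∈ B ∧ m.1 ∈ V ∧ V ⊂ m.2 then h.choose else m.2 with hS
  have hplay : ∀ (x : ℕ → X) (U : ℕ → Set X) (n : ℕ),
      playV S x U n = if h : ∃ V, V ∈ B ∧ x n ∈ V ∧ V ⊂ U n then h.choose else U n := by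
    intro x U n; rfl
  have hsing : ∀ (x : X) (U : Set X), IsOpen U → x ∈ U →
      ¬ (∃ V, V ∈ B ∧ x ∈ V ∧ V ⊂ U) → U = {x} := by
    intro x U hU hx hno
    ext z
    constructor
    · intro hz
      by_contra hne
      have hzx : z ≠ x := by simpa using hne
      have hop : IsOpen (U ∩ {z}ᶜ) := hU.inter (isOpen_compl_singleton)
      have hxm : x ∈ U ∩ {z}ᶜ := ⟨hx, by simpa using hzx.symm⟩
      obtain ⟨V, hVB, hxV, hVsub⟩ := hB.exists_subset_of_mem_open hxm hop
      exact hno ⟨V, hVB, hxV, ssubset_of_subset_of_ne (hVsub.trans inter_subset_left)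
        (fun hEq => (hVsub (hEq ▸ hz)).2 rfl)⟩
    · intro hz; simp at hz; subst hz; exact hx
  have hvalid : ValidStrategy S := by
    intro x U hL n
    obtain ⟨hUo, hxU, _⟩ := hL n
    rw [hplay]
    split_ifs with h
    · obtain ⟨hVB, hxV, hVU⟩ := h.choose_spec
      exact ⟨hB.isOpen hVB, hxV, hVU.subset⟩
    · exact ⟨hUo, hxU, subset_rfl⟩
  refine ⟨S, hvalid, fun h m => rfl, ?_⟩
  intro x U hL y hy W hW hyW
  by_cases hall : ∀ n, ∃ V, V ∈ B ∧ x n ∈ V ∧ V ⊂ U n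
  · -- all responses strict: get a strictly descending chain
    have hchain : ∀ n, playV S x U n ∈ B ∧ y ∈ playV S x U n ∧
        playV S x U (n + 1) ⊂ playV S x U n := by
      intro n
      have hyn : y ∈ playV S x U n := by
        have := mem_iInter.1 hy n; exact this
      have hVB : playV S x U n ∈ B := by
        rw [hplay]; rw [dif_pos (hall n)]; exact (hall n).choose_spec.1
      refine ⟨hVB, hyn, ?_⟩
      have h1 : playV S x U (n + 1) ⊂ U (n + 1) := by
        rw [hplay]; rw [dif_pos (hall (n + 1))]; exact (hall (n + 1)).choose_spec.2.2
      exact lt_of_lt_of_le h1 (hL n).2.2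
    exact hco y (fun n => playV S x U n) hchain W hW hyW
  · push_neg at hall
    obtain ⟨n, hn⟩ := hall
    obtain ⟨hUo, hxU, _⟩ := hL n
    have hUs : U n = {x n} := hsing (x n) (U n) hUo hxU (by
      intro ⟨V, hVB, hxV, hVU⟩; exact hn V hVB hxV hVU)
    have hVn : playV S x U n = U n := by
      rw [hplay]; rw [dif_neg (by intro ⟨V, hVB, hxV, hVU⟩; exact hn V hVB hxV hVU)]
    have hyn : y ∈ playV S x U n := mem_iInter.1 hy n
    rw [hVn, hUs] at hyn
    refine ⟨n, ?_⟩
    rw [hVn, hUs]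
    simp at hyn; subst hyn
    simpa using hyW
end

section
/- Let X and Y be T1 spaces and f : X → Y an open continuous surjection such that f⁻¹({y}) is compact for every y ∈ Y. If X is paracompact, then Y is metacompact. -/
open TopologicalSpace Set

universe u

variable {X : Type*}

/-- An open continuous compact image of a paracompact T1 space is metacompact. -/
theorem stmt17 (X Y : Type*) [TopologicalSpace X] [TopologicalSpace Y]
    [T1Space X] [T1Space Y] [ParacompactSpace X]
    (f : X → Y) (hcont : Continuous f) (hopen : IsOpenMap f)
    (hsurj : Function.Surjective f) (hcpt : ∀ y : Y, IsCompact (f ⁻¹' {y})) :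
    MetacompactSpace Y := by
  intro 𝒰 hUo hUcov
  -- pull back cover
  have hcov : ⋃ U : 𝒰, f ⁻¹' (U : Set Y) = univ := by
    rw [eq_univ_iff_forall]
    intro x
    have : f x ∈ ⋃₀ 𝒰 := hUcov ▸ mem_univ _
    rcases this with ⟨U, hU, hx⟩
    exact mem_iUnion.2 ⟨⟨U, hU⟩, hx⟩
  obtain ⟨v, hvo, hvcov, hvlf, hvsub⟩ := precise_refinement (fun U : 𝒰 => f ⁻¹' (U : Set Y))
    (fun U => (hUo U U.2).preimage hcont) hcov
  refine ⟨(fun U : 𝒰 => f '' v U) '' univ, ?_, ?_, ?_, ?_⟩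
  · rintro V ⟨U, -, rfl⟩
    exact hopen _ (hvo U)
  · rw [eq_univ_iff_forall]
    intro y
    obtain ⟨x, rfl⟩ := hsurj y
    have : x ∈ ⋃ U, v U := hvcov ▸ mem_univ _
    rcases mem_iUnion.1 this with ⟨U, hx⟩
    exact ⟨f '' v U, ⟨U, mem_univ _, rfl⟩, mem_image_of_mem f hx⟩
  · rintro V ⟨U, -, rfl⟩
    exact ⟨U, U.2, (image_mono (f := f) (hvsub U)).trans (image_preimage_subset f _)⟩
  · intro y
    have hfin : {U : 𝒰 | (v U ∩ f ⁻¹' {y}).Nonempty}.Finite :=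
      hvlf.finite_nonempty_inter_compact (hcpt y)
    apply Finite.subset (hfin.image fun U => f '' v U)
    rintro V ⟨⟨U, -, rfl⟩, hy⟩
    rcases hy with ⟨x, hx, rfl⟩
    exact ⟨U, ⟨x, hx, rfl⟩, rfl⟩
end
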